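/- (Interpolation step of Lemma 2.12) Let 2 < q < r ≤ ∞, h > 0, m > 0, and let a, b, c ≥ 0 be given with a ≤ C₁ h^m. Define μ = (1/2 − 1/q)/(1/q − 1/r) and δ = (m − d(1/2−1/q))/(1+μ), and assume δ > 0. If a measurable vector-valued function V on Ω satisfies ‖V‖_{L^q} ≤ ‖V‖_{L^2}^{1−s}‖V‖_{L^r}^{s} with s = μ/(1+μ) (L^p interpolation), ‖V‖_{L^2} ≤ C₁ h^m, and ‖V‖_{L^r} ≤ C₂ h^{−d(1/q−1/r)}‖V‖_{L^q} + C₃, then ‖V‖_{L^q} ≤ C h^δ with C depending only on C₁, C₂, C₃, m, d, q, r. -/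

import Mathlib

lemma rpow_add_le_add_rpow' {x y s : ℝ} (hx : 0 ≤ x) (hy : 0 ≤ y) (hs : 0 ≤ s) (hs1 : s ≤ 1) :
    (x + y) ^ s ≤ x ^ s + y ^ s := by
  have h := NNReal.rpow_add_le_add_rpow x.toNNReal y.toNNReal hs hs1
  have := NNReal.coe_le_coe.2 h
  push_cast [NNReal.coe_rpow, Real.coe_toNNReal _ hx, Real.coe_toNNReal _ hy,
    Real.coe_toNNReal _ (add_nonneg hx hy)] at this
  simpa using this

set_option maxHeartbeats 1000000 in
theorem interpolation_step
    (d : ℕ) (q rinv m : ℝ)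
    (hq2 : 2 < q) (hrinv0 : 0 ≤ rinv) (hrq : rinv < 1 / q) (hm : 0 < m) :
    ∀ μ s δ : ℝ,
      μ = (1 / 2 - 1 / q) / (1 / q - rinv) →
      s = μ / (1 + μ) →
      δ = (m - (d : ℝ) * (1 / 2 - 1 / q)) / (1 + μ) →
      0 < δ →
    ∀ C₁ C₂ C₃ : ℝ, 0 ≤ C₁ → 0 ≤ C₂ → 0 ≤ C₃ →
    ∃ C > (0:ℝ), ∀ h V2 Vq Vr : ℝ,
      0 < h → h ≤ 1 →
      0 ≤ V2 → 0 ≤ Vq → 0 ≤ Vr →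
      Vq ≤ V2 ^ (1 - s) * Vr ^ s →
      V2 ≤ C₁ * h ^ m →
      Vr ≤ C₂ * h ^ (-(d : ℝ) * (1 / q - rinv)) * Vq + C₃ →
      Vq ≤ C * h ^ δ := by
  intro μ s δ hμdef hsdef hδdef hδ C₁ C₂ C₃ hC₁ hC₂ hC₃
  have hq0 : (0:ℝ) < q := by linarith
  have hP : 0 < 1/2 - 1/q := by
    have : 1/q < 1/2 := by
      rw [div_lt_div_iff₀ hq0 (by norm_num)]; linarith
    linarith
  have hQ : 0 < 1/q - rinv := by linarith
  have hμ0 : 0 < μ := by rw [hμdef]; positivity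
  have h1μ : 0 < 1 + μ := by linarith
  have hs0 : 0 < s := by rw [hsdef]; positivity
  have hs1 : s < 1 := by rw [hsdef, div_lt_one h1μ]; linarith
  have h1s0 : 0 < 1 - s := by linarith
  have h1s : 1 - s = 1/(1+μ) := by rw [hsdef]; field_simp; ring
  have hμs : μ * (1 - s) = s := by rw [h1s, hsdef]; field_simp
  -- exponent arithmetic
  have hcancel : (1/q - rinv) * ((1/2 - 1/q)/(1/q - rinv)) = 1/2 - 1/q :=
    mul_div_cancel₀ _ hQ.ne'
  have heμ : (d:ℝ) * (1/q - rinv) * μ = (d:ℝ) * (1/2 - 1/q) := by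
    rw [hμdef, mul_assoc, hcancel]
  have hδeq : δ * (1 + μ) = m - (d:ℝ) * (1/2 - 1/q) := by
    rw [hδdef]; field_simp
  have hδle : δ ≤ m - (d:ℝ) * (1/q - rinv) * μ := by
    rw [heμ]; nlinarith [hδeq]
  have hδle2 : δ ≤ m * (1 - s) := by
    have hd0 : 0 ≤ (d:ℝ) * (1/2 - 1/q) := by positivity
    rw [h1s, hδdef, mul_one_div]
    exact div_le_div_of_nonneg_right (by linarith) h1μ.le
  refine ⟨C₁ * C₂ ^ μ + C₁ ^ (1-s) * C₃ ^ s / (1-s) + 1, by positivity, ?_⟩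
  intro h V2 Vq Vr hh0 hh1 hV2 hVq hVr hint h2 hr
  have hδh : 0 ≤ h ^ δ := by positivity
  set e : ℝ := (d:ℝ) * (1/q - rinv) with he
  have hrw : -(d:ℝ) * (1/q - rinv) = -e := by rw [he]; ring
  rw [hrw] at hr
  have hhe : (0:ℝ) ≤ C₂ * h ^ (-e) * Vq := by positivity
  -- step 1: Vr^s bound
  have step1 : Vr ^ s ≤ (C₂ * h ^ (-e) * Vq) ^ s + C₃ ^ s := by
    calc Vr ^ s ≤ (C₂ * h ^ (-e) * Vq + C₃) ^ s :=
          Real.rpow_le_rpow hVr hr hs0.le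
      _ ≤ _ := rpow_add_le_add_rpow' hhe hC₃ hs0.le hs1.le
  -- step 2
  have step2 : Vq ≤ V2 ^ (1-s) * (C₂ * h ^ (-e)) ^ s * Vq ^ s + V2 ^ (1-s) * C₃ ^ s := by
    have := mul_le_mul_of_nonneg_left step1 (Real.rpow_nonneg hV2 (1-s))
    calc Vq ≤ V2 ^ (1-s) * Vr ^ s := hint
      _ ≤ V2 ^ (1-s) * ((C₂ * h ^ (-e) * Vq) ^ s + C₃ ^ s) := this
      _ = V2 ^ (1-s) * (C₂ * h ^ (-e)) ^ s * Vq ^ s + V2 ^ (1-s) * C₃ ^ s := by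
          rw [Real.mul_rpow (by positivity) hVq]; ring
  -- Young: X^(1-s) Vq^s ≤ (1-s) X + s Vq  with X = V2 * (C₂ h^(-e))^μ
  set X : ℝ := V2 * (C₂ * h ^ (-e)) ^ μ with hX
  have hX0 : 0 ≤ X := by positivity
  have hXrw : X ^ (1-s) = V2 ^ (1-s) * (C₂ * h ^ (-e)) ^ s := by
    rw [hX, Real.mul_rpow hV2 (by positivity), ← Real.rpow_mul (by positivity), hμs]
  have young : X ^ (1-s) * Vq ^ s ≤ (1-s) * X + s * Vq :=
    Real.geom_mean_le_arith_mean2_weighted h1s0.le hs0.le hX0 hVq (by ring)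
  have step3 : (1-s) * Vq ≤ (1-s) * X + V2 ^ (1-s) * C₃ ^ s := by
    have h' := step2
    rw [← hXrw] at h'
    linarith [young]
  have step4 : Vq ≤ X + V2 ^ (1-s) * C₃ ^ s / (1-s) := by
    rw [← mul_le_mul_iff_right₀ h1s0]
    calc (1-s) * Vq ≤ (1-s) * X + V2 ^ (1-s) * C₃ ^ s := step3
      _ = (1-s) * (X + V2 ^ (1-s) * C₃ ^ s / (1-s)) := by field_simp
  -- bound X
  have hXb : X ≤ C₁ * C₂ ^ μ * h ^ δ := by
    have h1 : (C₂ * h ^ (-e)) ^ μ = C₂ ^ μ * h ^ (-e*μ) := by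
      rw [Real.mul_rpow hC₂ (by positivity), ← Real.rpow_mul hh0.le]
    calc X = V2 * (C₂ * h ^ (-e)) ^ μ := hX
      _ ≤ (C₁ * h ^ m) * (C₂ ^ μ * h ^ (-e*μ)) := by
          rw [h1]; exact mul_le_mul_of_nonneg_right h2 (by positivity)
      _ = C₁ * C₂ ^ μ * h ^ (m - e*μ) := by
          rw [show m - e*μ = m + (-e*μ) by ring, Real.rpow_add hh0]; ring
      _ ≤ C₁ * C₂ ^ μ * h ^ δ := by
          have : h ^ (m - e*μ) ≤ h ^ δ :=
            Real.rpow_le_rpow_of_exponent_ge hh0 hh1 hδle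
          exact mul_le_mul_of_nonneg_left this (by positivity)
  -- bound second term
  have hBb : V2 ^ (1-s) * C₃ ^ s ≤ C₁ ^ (1-s) * C₃ ^ s * h ^ δ := by
    calc V2 ^ (1-s) * C₃ ^ s ≤ (C₁ * h ^ m) ^ (1-s) * C₃ ^ s := by
          exact mul_le_mul_of_nonneg_right
            (Real.rpow_le_rpow hV2 h2 h1s0.le) (by positivity)
      _ = C₁ ^ (1-s) * h ^ (m*(1-s)) * C₃ ^ s := by
          rw [Real.mul_rpow hC₁ (by positivity), ← Real.rpow_mul hh0.le]
      _ = C₁ ^ (1-s) * C₃ ^ s * h ^ (m*(1-s)) := by ring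
      _ ≤ C₁ ^ (1-s) * C₃ ^ s * h ^ δ :=
          mul_le_mul_of_nonneg_left
            (Real.rpow_le_rpow_of_exponent_ge hh0 hh1 hδle2) (by positivity)
  calc Vq ≤ X + V2 ^ (1-s) * C₃ ^ s / (1-s) := step4
    _ ≤ C₁ * C₂ ^ μ * h ^ δ + C₁ ^ (1-s) * C₃ ^ s * h ^ δ / (1-s) := by
        refine add_le_add hXb ?_
        exact div_le_div_of_nonneg_right hBb h1s0.le
    _ ≤ (C₁ * C₂ ^ μ + C₁ ^ (1-s) * C₃ ^ s / (1-s) + 1) * h ^ δ := by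
        have hexp : (C₁ * C₂ ^ μ + C₁ ^ (1-s) * C₃ ^ s / (1-s) + 1) * h ^ δ
            = C₁ * C₂ ^ μ * h ^ δ + C₁ ^ (1-s) * C₃ ^ s * h ^ δ / (1-s) + h ^ δ := by
          ring
        linarith
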